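/- Every consistent map c : J → ℝ extends to a unique charge μ on the ring R generated by the sets Y(K,v), satisfying μ(Y(K,v)) = c(K,v) for all (K,v) ∈ J. -/

import Mathlib

/-- Abstract axiomatization of the space `Y` of all places of `\overline{ℚ}`: a directed
system `F` of number fields (ordered by field extension `le`), the places `Pl K` of each
number field, the map `over` sending a place `w` of `L` to the place of `K` it divides, and
the basic compact open sets `Y(K,v) = {y ∈ Y : y ∣ v}` forming a basis of the totally
disconnected Hausdorff topology on `Y`. -/
structure PlaceSystem where
  /-- the number fields -/
  F : Type
  /-- `le K L` means `L/K` is a (finite) field extension -/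
  le : F → F → Prop
  le_refl : ∀ K, le K K
  /-- any two number fields admit a compositum -/
  directed : ∀ K L, ∃ M, le K M ∧ le L M
  /-- the places of a number field -/
  Pl : F → Type
  /-- `over h w` is the unique place of `K` divided by the place `w` of `L` -/
  overMap : ∀ {K L : F}, le K L → Pl L → Pl K
  /-- only finitely many places of `L` divide a given place of `K` -/
  finiteFibers : ∀ {K L : F} (h : le K L) (v : Pl K), {w : Pl L | overMap h w = v}.Finite
  /-- the set of places of `\overline{ℚ}` -/
  Y : Type
  top : TopologicalSpace Y
  t2 : @T2Space Y top
  /-- the basic set `Y(K,v)` of places of `\overline{ℚ}` dividing `v` -/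
  Yset : (K : F) → Pl K → Set Y
  Yset_nonempty : ∀ (K : F) (v : Pl K), (Yset K v).Nonempty
  Yset_compact : ∀ (K : F) (v : Pl K), @IsCompact Y top (Yset K v)
  Yset_open : ∀ (K : F) (v : Pl K), @IsOpen Y top (Yset K v)
  Yset_disjoint : ∀ (K : F) (v w : Pl K), v ≠ w → Disjoint (Yset K v) (Yset K w)
  /-- `Y(K,v)` is the disjoint union of the `Y(L,w)` over the places `w ∣ v` of `L` -/
  Yset_decomp : ∀ {K L : F} (h : le K L) (v : Pl K),
    Yset K v = ⋃ w ∈ {w : Pl L | overMap h w = v}, Yset L w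
  basis : @TopologicalSpace.IsTopologicalBasis Y top
    {A : Set Y | ∃ (K : F) (v : Pl K), A = Yset K v}
  cover : (⋃ (K : F) (v : Pl K), Yset K v) = Set.univ
  noncompact : ¬ @IsCompact Y top Set.univ

/-- A map `c` on pairs `(K,v)` is consistent if `c(K,v) = Σ_{w ∣ v} c(L,w)` for every finite
extension `L/K`. -/
def PlaceSystem.Consistent (S : PlaceSystem) (c : ∀ K : S.F, S.Pl K → ℝ) : Prop :=
  ∀ {K L : S.F} (h : S.le K L) (v : S.Pl K),
    c K v = ∑ᶠ (w : S.Pl L) (_ : S.overMap h w = v), c L w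

/-- `R`, the smallest ring of sets on `Y` containing all the basic sets `Y(K,v)`. -/
def PlaceSystem.ringR (S : PlaceSystem) : Set (Set S.Y) :=
  ⋂₀ {R : Set (Set S.Y) |
    MeasureTheory.IsSetRing R ∧ ∀ (K : S.F) (v : S.Pl K), S.Yset K v ∈ R}

/-- A charge on `R`: a finitely additive real-valued set function vanishing on `∅`. -/
def PlaceSystem.IsCharge (S : PlaceSystem) (μ : Set S.Y → ℝ) : Prop :=
  μ ∅ = 0 ∧ ∀ A ∈ S.ringR, ∀ B ∈ S.ringR, Disjoint A B → μ (A ∪ B) = μ A + μ B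

namespace PlaceSystem

open scoped Classical

variable (S : PlaceSystem)

/-- The finset of places of `L` dividing `v`. -/
noncomputable def fiber {K L : S.F} (h : S.le K L) (v : S.Pl K) : Finset (S.Pl L) :=
  (S.finiteFibers h v).toFinset

lemma mem_fiber {K L : S.F} (h : S.le K L) (v : S.Pl K) (w : S.Pl L) :
    w ∈ S.fiber h v ↔ S.overMap h w = v := by
  simp [fiber]

/-- The finite union of basic sets. -/
def U (K : S.F) (T : Finset (S.Pl K)) : Set S.Y := ⋃ v ∈ T, S.Yset K v

/-- The value of the charge on `U K T`. -/
noncomputable def val (c : ∀ K : S.F, S.Pl K → ℝ) (K : S.F) (T : Finset (S.Pl K)) : ℝ :=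
  ∑ v ∈ T, c K v

lemma U_refine {K L : S.F} (h : S.le K L) (T : Finset (S.Pl K)) :
    S.U K T = S.U L (T.biUnion (S.fiber h)) := by
  ext y
  simp only [U, Set.mem_iUnion, Finset.mem_biUnion, mem_fiber]
  constructor
  · rintro ⟨v, hv, hy⟩
    rw [S.Yset_decomp h v] at hy
    simp only [Set.mem_iUnion, Set.mem_setOf_eq] at hy
    obtain ⟨w, hw, hyw⟩ := hy
    exact ⟨w, ⟨v, hv, hw⟩, hyw⟩
  · rintro ⟨w, ⟨v, hv, hw⟩, hy⟩
    refine ⟨v, hv, ?_⟩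
    rw [S.Yset_decomp h v]
    simp only [Set.mem_iUnion, Set.mem_setOf_eq]
    exact ⟨w, hw, hy⟩

lemma val_refine {K L : S.F} (h : S.le K L) (c : ∀ K : S.F, S.Pl K → ℝ)
    (hc : S.Consistent c) (T : Finset (S.Pl K)) :
    S.val c K T = S.val c L (T.biUnion (S.fiber h)) := by
  unfold val
  rw [Finset.sum_biUnion]
  · refine Finset.sum_congr rfl fun v _ => ?_
    have h1 : c K v = ∑ᶠ w ∈ {w : S.Pl L | S.overMap h w = v}, c L w := hc h v
    rw [h1, ← (S.finiteFibers h v).coe_toFinset, finsum_mem_coe_finset]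
    rfl
  · intro v₁ h₁ v₂ h₂ hne
    simp only [Finset.disjoint_left, mem_fiber]
    intro w hw₁ hw₂
    exact hne (hw₁ ▸ hw₂ ▸ rfl)

lemma mem_iff_subset (K : S.F) (T : Finset (S.Pl K)) (w : S.Pl K) :
    w ∈ T ↔ S.Yset K w ⊆ S.U K T := by
  constructor
  · intro hw
    exact Set.subset_biUnion_of_mem hw
  · intro hsub
    obtain ⟨y, hy⟩ := S.Yset_nonempty K w
    obtain ⟨v, hv, hyv⟩ : ∃ v ∈ T, y ∈ S.Yset K v := by
      simpa [U, Set.mem_iUnion] using hsub hy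
    rcases eq_or_ne v w with rfl | hne
    · exact hv
    · exact absurd (S.Yset_disjoint K v w hne) (Set.not_disjoint_iff.2 ⟨y, hyv, hy⟩)

lemma val_eq {c : ∀ K : S.F, S.Pl K → ℝ} (hc : S.Consistent c)
    {K₁ K₂ : S.F} {T₁ : Finset (S.Pl K₁)} {T₂ : Finset (S.Pl K₂)}
    (hU : S.U K₁ T₁ = S.U K₂ T₂) : S.val c K₁ T₁ = S.val c K₂ T₂ := by
  obtain ⟨M, h₁, h₂⟩ := S.directed K₁ K₂
  rw [S.val_refine h₁ c hc, S.val_refine h₂ c hc]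
  congr 1
  have e₁ := S.U_refine h₁ T₁
  have e₂ := S.U_refine h₂ T₂
  ext w
  rw [S.mem_iff_subset, S.mem_iff_subset, ← e₁, ← e₂, hU]

/-- Finite unions of basic sets from a single field. -/
def R0 : Set (Set S.Y) := {A | ∃ K T, A = S.U K T}

lemma F_nonempty : Nonempty S.F := by
  by_contra hne
  rw [not_nonempty_iff] at hne
  apply S.noncompact
  have : (Set.univ : Set S.Y) = ∅ := by
    rw [← S.cover, Set.iUnion_of_empty]
  rw [this]
  letI := S.top
  exact isCompact_empty

lemma empty_mem_R0 : (∅ : Set S.Y) ∈ S.R0 := by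
  obtain ⟨K⟩ := S.F_nonempty
  exact ⟨K, ∅, by simp [U]⟩

lemma Yset_mem_R0 (K : S.F) (v : S.Pl K) : S.Yset K v ∈ S.R0 :=
  ⟨K, {v}, by simp [U]⟩

lemma U_union (K : S.F) (T₁ T₂ : Finset (S.Pl K)) :
    S.U K (T₁ ∪ T₂) = S.U K T₁ ∪ S.U K T₂ := by
  ext y
  simp only [U, Set.mem_iUnion, Set.mem_union, Finset.mem_union]
  constructor
  · rintro ⟨v, hv | hv, hy⟩
    exacts [Or.inl ⟨v, hv, hy⟩, Or.inr ⟨v, hv, hy⟩]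
  · rintro (⟨v, hv, hy⟩ | ⟨v, hv, hy⟩)
    exacts [⟨v, Or.inl hv, hy⟩, ⟨v, Or.inr hv, hy⟩]

lemma U_sdiff (K : S.F) (T₁ T₂ : Finset (S.Pl K)) :
    S.U K (T₁ \ T₂) = S.U K T₁ \ S.U K T₂ := by
  ext y
  simp only [U, Set.mem_iUnion, Set.mem_diff, Finset.mem_sdiff, not_exists]
  constructor
  · rintro ⟨v, ⟨hv₁, hv₂⟩, hy⟩
    refine ⟨⟨v, hv₁, hy⟩, fun w hw hyw => ?_⟩
    rcases eq_or_ne v w with rfl | hne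
    · exact hv₂ hw
    · exact absurd (S.Yset_disjoint K v w hne) (Set.not_disjoint_iff.2 ⟨y, hy, hyw⟩)
  · rintro ⟨⟨v, hv, hy⟩, hnot⟩
    exact ⟨v, ⟨hv, fun hv₂ => hnot v hv₂ hy⟩, hy⟩

/-- Common refinement of two elements of `R0`. -/
lemma exists_common {A B : Set S.Y} (hA : A ∈ S.R0) (hB : B ∈ S.R0) :
    ∃ (M : S.F) (T₁ T₂ : Finset (S.Pl M)), A = S.U M T₁ ∧ B = S.U M T₂ := by
  obtain ⟨K₁, T₁, rfl⟩ := hA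
  obtain ⟨K₂, T₂, rfl⟩ := hB
  obtain ⟨M, h₁, h₂⟩ := S.directed K₁ K₂
  exact ⟨M, _, _, S.U_refine h₁ T₁, S.U_refine h₂ T₂⟩

lemma isSetRing_R0 : MeasureTheory.IsSetRing S.R0 := by
  constructor
  · exact S.empty_mem_R0
  · intro A B hA hB
    obtain ⟨M, T₁, T₂, rfl, rfl⟩ := S.exists_common hA hB
    exact ⟨M, T₁ ∪ T₂, (S.U_union M T₁ T₂).symm⟩
  · intro A B hA hB
    obtain ⟨M, T₁, T₂, rfl, rfl⟩ := S.exists_common hA hB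
    exact ⟨M, T₁ \ T₂, (S.U_sdiff M T₁ T₂).symm⟩

lemma ringR_eq : S.ringR = S.R0 := by
  apply le_antisymm
  · intro A hA
    exact hA S.R0 ⟨S.isSetRing_R0, S.Yset_mem_R0⟩
  · rintro A ⟨K, T, rfl⟩
    intro R hR
    obtain ⟨hring, hY⟩ := hR
    classical
    induction T using Finset.induction_on with
    | empty => simpa [U] using hring.empty_mem
    | @insert v T hv ih =>
        have : S.U K (insert v T) = S.Yset K v ∪ S.U K T := by
          simp [U, Set.biUnion_insert]
        rw [this]
        exact hring.union_mem (hY K v) ih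

noncomputable def mu (c : ∀ K : S.F, S.Pl K → ℝ) : Set S.Y → ℝ :=
  fun A => if h : A ∈ S.R0 then S.val c h.choose h.choose_spec.choose else 0

lemma mu_U {c : ∀ K : S.F, S.Pl K → ℝ} (hc : S.Consistent c) (K : S.F)
    (T : Finset (S.Pl K)) : S.mu c (S.U K T) = S.val c K T := by
  have h : S.U K T ∈ S.R0 := ⟨K, T, rfl⟩
  rw [mu, dif_pos h]
  exact S.val_eq hc h.choose_spec.choose_spec.symm

lemma mu_not_mem {c : ∀ K : S.F, S.Pl K → ℝ} {A : Set S.Y} (hA : A ∉ S.R0) :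
    S.mu c A = 0 := dif_neg hA

end PlaceSystem

/-- Every consistent map extends to a unique charge `μ` on the ring `R` generated by the
basic sets `Y(K,v)` (normalized to vanish off `R`), with `μ(Y(K,v)) = c(K,v)`. -/
theorem stmt_8 (S : PlaceSystem) (c : ∀ K : S.F, S.Pl K → ℝ) (hc : S.Consistent c) :
    ∃! μ : Set S.Y → ℝ, S.IsCharge μ ∧ (∀ A ∉ S.ringR, μ A = 0) ∧
      ∀ (K : S.F) (v : S.Pl K), μ (S.Yset K v) = c K v := by
  classical
  refine ⟨S.mu c, ⟨⟨?_, ?_⟩, ?_, ?_⟩, ?_⟩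
  · -- μ ∅ = 0
    obtain ⟨K⟩ := S.F_nonempty
    have h : (∅ : Set S.Y) = S.U K ∅ := by simp [PlaceSystem.U]
    rw [h, S.mu_U hc]
    simp [PlaceSystem.val]
  · -- additivity
    intro A hA B hB hAB
    rw [S.ringR_eq] at hA hB
    obtain ⟨M, T₁, T₂, rfl, rfl⟩ := S.exists_common hA hB
    have hd : Disjoint T₁ T₂ := by
      rw [Finset.disjoint_left]
      intro w h1 h2
      obtain ⟨y, hy⟩ := S.Yset_nonempty M w
      have s1 := (S.mem_iff_subset M T₁ w).1 h1 hy
      have s2 := (S.mem_iff_subset M T₂ w).1 h2 hy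
      exact Set.disjoint_left.1 hAB s1 s2
    rw [← S.U_union, S.mu_U hc, S.mu_U hc, S.mu_U hc]
    simp [PlaceSystem.val, Finset.sum_union hd]
  · -- vanishes off R
    intro A hA
    rw [S.ringR_eq] at hA
    exact S.mu_not_mem hA
  · -- value on basic sets
    intro K v
    have h : S.Yset K v = S.U K {v} := by simp [PlaceSystem.U]
    rw [h, S.mu_U hc]
    simp [PlaceSystem.val]
  · -- uniqueness
    rintro ν ⟨⟨hν0, hνadd⟩, hνoff, hνY⟩
    funext A
    by_cases hA : A ∈ S.ringR
    · have hA0 := hA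
      rw [S.ringR_eq] at hA0
      obtain ⟨K, T, rfl⟩ := hA0
      have key : ∀ T : Finset (S.Pl K), ν (S.U K T) = S.val c K T := by
        intro T
        classical
        induction T using Finset.induction_on with
        | empty => simpa [PlaceSystem.U, PlaceSystem.val] using hν0
        | @insert v T hv ih =>
            have hU : S.U K (insert v T) = S.Yset K v ∪ S.U K T := by
              simp [PlaceSystem.U, Set.biUnion_insert]
            have hdisj : Disjoint (S.Yset K v) (S.U K T) := by
              rw [Set.disjoint_left]
              intro y hy hyT
              obtain ⟨w, hw, hyw⟩ : ∃ w ∈ T, y ∈ S.Yset K w := by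
                simpa [PlaceSystem.U] using hyT
              have hne : v ≠ w := fun h => hv (h ▸ hw)
              exact (Set.disjoint_left.1 (S.Yset_disjoint K v w hne)) hy hyw
            have h1 : S.Yset K v ∈ S.ringR := by
              rw [S.ringR_eq]; exact S.Yset_mem_R0 K v
            have h2 : S.U K T ∈ S.ringR := by
              rw [S.ringR_eq]; exact ⟨K, T, rfl⟩
            rw [hU, hνadd _ h1 _ h2 hdisj, ih, hνY K v]
            simp [PlaceSystem.val, Finset.sum_insert hv]
      rw [key T, S.mu_U hc]
    · rw [hνoff A hA]
      rw [S.ringR_eq] at hA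
      exact (S.mu_not_mem hA).symm
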